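/- (Necessary condition / counterexample) Let δ ≥ 1 and p ∈ [12/7, 2]. Suppose that for all f, g ∈ L²(ℝ×𝕋) with f̂ supported in θ₁ = [0,δ]×({0,…,δ}∩ℤ) and ĝ supported in θ₂ = [0,δ]×({100δ,…,101δ}∩ℤ), one has ‖e^{itΔ}f · e^{itΔ}g‖_{L²([−T,T]×ℝ×𝕋)} ≤ δ^{2−4/p} ‖f̂‖_{L^p}‖ĝ‖_{L^p}. Then T ≤ C δ^{8(p−2)/(4−p)} for an absolute constant C. In particular, for p = 12/7 the estimate forces T ≲ δ^{−1}. -/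

import Mathlib

open Real MeasureTheory
open scoped ENNReal

/-- Lebesgue × counting measure on `ℝ × ℤ`. -/
noncomputable def muZ : Measure (ℝ × ℤ) :=
  (volume : Measure ℝ).prod Measure.count

/-- The Schrödinger propagator on the waveguide `ℝ × 𝕋`, on the frequency side. -/
noncomputable def waveguideProp (F : ℝ × ℤ → ℂ) (t : ℝ) (x : ℝ × AddCircle (1 : ℝ)) : ℂ :=
  ∑' n : ℤ, ∫ ξ : ℝ,
    Complex.exp (2 * (π : ℂ) * Complex.I *
      ((x.1 * ξ - 2 * π * t * (ξ ^ 2 + (n : ℝ) ^ 2) : ℝ) : ℂ)) *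
      (fourier n x.2) * F (ξ, n)

noncomputable def bumpF (a : ℝ) (n₀ : ℤ) : ℝ × ℤ → ℂ :=
  fun q => if q.2 = n₀ ∧ q.1 ∈ Set.Icc (0:ℝ) a then 1 else 0

lemma waveguideProp_bump (a : ℝ) (n₀ : ℤ) (t : ℝ) (x : ℝ × AddCircle (1:ℝ)) :
    waveguideProp (bumpF a n₀) t x =
      (∫ ξ in Set.Icc (0:ℝ) a, Complex.exp (2 * (π:ℂ) * Complex.I *
        ((x.1 * ξ - 2 * π * t * (ξ ^ 2 + (n₀:ℝ) ^ 2) : ℝ) : ℂ))) * fourier n₀ x.2 := by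
  unfold waveguideProp bumpF
  rw [tsum_eq_single n₀]
  · have : ∀ ξ : ℝ, Complex.exp (2 * (π:ℂ) * Complex.I *
        ((x.1 * ξ - 2 * π * t * (ξ ^ 2 + (n₀:ℝ) ^ 2) : ℝ) : ℂ)) * fourier n₀ x.2 *
        (if (ξ, n₀).2 = n₀ ∧ (ξ, n₀).1 ∈ Set.Icc (0:ℝ) a then (1:ℂ) else 0) =
        (Set.Icc (0:ℝ) a).indicator (fun ξ => Complex.exp (2 * (π:ℂ) * Complex.I *
        ((x.1 * ξ - 2 * π * t * (ξ ^ 2 + (n₀:ℝ) ^ 2) : ℝ) : ℂ)) * fourier n₀ x.2) ξ := by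
      intro ξ
      by_cases h : ξ ∈ Set.Icc (0:ℝ) a <;> simp [h, Set.indicator]
    rw [show (fun ξ : ℝ => Complex.exp (2 * (π:ℂ) * Complex.I *
        ((x.1 * ξ - 2 * π * t * (ξ ^ 2 + (n₀:ℝ) ^ 2) : ℝ) : ℂ)) * fourier n₀ x.2 *
        (if (ξ, n₀).2 = n₀ ∧ (ξ, n₀).1 ∈ Set.Icc (0:ℝ) a then (1:ℂ) else 0)) = _ from funext this,
      integral_indicator measurableSet_Icc, integral_mul_const]
  · intro n hn
    simp [hn]

lemma integral_phase_lb (a : ℝ) (ha : 0 ≤ a) (φ : ℝ → ℝ) (hφcont : Continuous φ)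
    (hφ : ∀ ξ ∈ Set.Icc (0:ℝ) a, |φ ξ| ≤ π / 3) :
    a / 2 ≤ ‖∫ ξ in Set.Icc (0:ℝ) a, Complex.exp ((φ ξ : ℂ) * Complex.I)‖ := by
  have hcont : Continuous fun ξ : ℝ => Complex.exp ((φ ξ : ℂ) * Complex.I) := by
    continuity
  have hint : IntegrableOn (fun ξ : ℝ => Complex.exp ((φ ξ : ℂ) * Complex.I))
      (Set.Icc (0:ℝ) a) := hcont.integrableOn_Icc
  have hre : (∫ ξ in Set.Icc (0:ℝ) a, Complex.exp ((φ ξ : ℂ) * Complex.I)).re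
      = ∫ ξ in Set.Icc (0:ℝ) a, Real.cos (φ ξ) := by
    have h := integral_re (𝕜 := ℂ) hint
    simp only [RCLike.re_to_complex] at h
    rw [← h]
    congr 1
    ext ξ
    exact Complex.exp_ofReal_mul_I_re (φ ξ)
  have hcos : ∀ ξ ∈ Set.Icc (0:ℝ) a, (1:ℝ)/2 ≤ Real.cos (φ ξ) := by
    intro ξ hξ
    have h1 : Real.cos (π/3) ≤ Real.cos |φ ξ| :=
      Real.cos_le_cos_of_nonneg_of_le_pi (abs_nonneg _)
        (by linarith [Real.pi_pos]) (hφ ξ hξ)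
    rw [Real.cos_pi_div_three] at h1
    rwa [Real.cos_abs] at h1
  have hmono : a / 2 ≤ ∫ ξ in Set.Icc (0:ℝ) a, Real.cos (φ ξ) := by
    have : ∫ ξ in Set.Icc (0:ℝ) a, (1:ℝ)/2 ≤ ∫ ξ in Set.Icc (0:ℝ) a, Real.cos (φ ξ) := by
      apply setIntegral_mono_on (integrableOn_const measure_Icc_lt_top.ne)
        ((Real.continuous_cos.comp hφcont).integrableOn_Icc) measurableSet_Icc hcos
    rw [setIntegral_const, Real.volume_real_Icc_of_le ha, smul_eq_mul,
      sub_zero] at this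
    linarith
  calc a / 2 ≤ (∫ ξ in Set.Icc (0:ℝ) a, Complex.exp ((φ ξ : ℂ) * Complex.I)).re := by
        rw [hre]; exact hmono
    _ ≤ ‖∫ ξ in Set.Icc (0:ℝ) a, Complex.exp ((φ ξ : ℂ) * Complex.I)‖ :=
        Complex.re_le_norm _

lemma mod_lb (T : ℝ) (hT : 0 < T) (n₀ : ℤ) (t x : ℝ) (ht : |t| ≤ T)
    (hx0 : 0 ≤ x) (hx : x ≤ Real.sqrt T / 2) :
    (1/(10*Real.sqrt T)) / 2 ≤ ‖∫ ξ in Set.Icc (0:ℝ) (1/(10*Real.sqrt T)),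
      Complex.exp (2 * (π:ℂ) * Complex.I *
        ((x * ξ - 2 * π * t * (ξ ^ 2 + (n₀:ℝ) ^ 2) : ℝ) : ℂ))‖ := by
  set s := Real.sqrt T with hs_def
  have hs : 0 < s := Real.sqrt_pos.mpr hT
  have hs2 : s ^ 2 = T := Real.sq_sqrt hT.le
  set u := 1/(10*s) with hu_def
  have hu : 0 < u := by positivity
  have key : ∀ ξ : ℝ, Complex.exp (2 * (π:ℂ) * Complex.I *
      ((x * ξ - 2 * π * t * (ξ ^ 2 + (n₀:ℝ) ^ 2) : ℝ) : ℂ))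
      = Complex.exp (((2*π*(x*ξ - 2*π*t*ξ^2) : ℝ) : ℂ) * Complex.I) *
        Complex.exp (((-(2*π*(2*π*t*(n₀:ℝ)^2)) : ℝ) : ℂ) * Complex.I) := by
    intro ξ
    rw [← Complex.exp_add]
    congr 1
    push_cast
    ring
  rw [show (fun ξ : ℝ => Complex.exp (2 * (π:ℂ) * Complex.I *
      ((x * ξ - 2 * π * t * (ξ ^ 2 + (n₀:ℝ) ^ 2) : ℝ) : ℂ))) = _ from funext key,
    integral_mul_const, norm_mul,
    Complex.norm_exp_ofReal_mul_I, mul_one]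
  apply integral_phase_lb u hu.le (fun ξ => 2*π*(x*ξ - 2*π*t*ξ^2)) (by continuity)
  intro ξ hξ
  obtain ⟨hξ0, hξu⟩ := hξ
  have hπ : (0:ℝ) < π := Real.pi_pos
  have hπ4 : π ≤ 4 := Real.pi_le_four
  have hsu : s * u = 1/10 := by rw [hu_def]; field_simp
  have h1 : x * ξ ≤ 1/20 := by nlinarith [mul_le_mul hx hξu hξ0 (by positivity : (0:ℝ) ≤ s/2)]
  have h10 : 0 ≤ x * ξ := mul_nonneg hx0 hξ0
  have hu2 : u^2 * T = 1/100 := by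
    rw [← hs2, hu_def]; field_simp; ring
  have h2 : |t * ξ^2| ≤ 1/100 := by
    rw [abs_mul, abs_of_nonneg (sq_nonneg ξ)]
    have hξ2 : ξ^2 ≤ u^2 := by nlinarith
    nlinarith [abs_nonneg t, sq_nonneg ξ, mul_le_mul ht hξ2 (sq_nonneg ξ) hT.le]
  have ht2 := abs_le.mp h2
  rw [abs_le]
  constructor <;> nlinarith [mul_le_mul_of_nonneg_left h1 hπ.le,
    mul_le_mul_of_nonneg_left ht2.1 (by positivity : (0:ℝ) ≤ 4*π^2),
    mul_le_mul_of_nonneg_left ht2.2 (by positivity : (0:ℝ) ≤ 4*π^2),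
    mul_le_mul_of_nonneg_left h10 hπ.le, sq_nonneg π, mul_pos hπ hπ]

instance : SFinite (Measure.count : Measure ℤ) := by
  unfold Measure.count; infer_instance

lemma eLpNorm_bump (a : ℝ) (ha : 0 ≤ a) (n₀ : ℤ) (p : ℝ) (hp : 0 < p) :
    eLpNorm (bumpF a n₀) (ENNReal.ofReal p) muZ = (ENNReal.ofReal a) ^ ((1:ℝ)/p) := by
  have hp0 : ENNReal.ofReal p ≠ 0 := (ENNReal.ofReal_pos.mpr hp).ne'
  have hptop : ENNReal.ofReal p ≠ ∞ := ENNReal.ofReal_ne_top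
  rw [eLpNorm_eq_lintegral_rpow_enorm_toReal hp0 hptop]
  simp only [enorm_eq_nnnorm]
  have htor : (ENNReal.ofReal p).toReal = p := ENNReal.toReal_ofReal hp.le
  rw [htor]
  have hfun : (fun z : ℝ × ℤ => ((‖bumpF a n₀ z‖₊ : ℝ≥0∞)) ^ p)
      = (Set.Icc (0:ℝ) a ×ˢ ({n₀} : Set ℤ)).indicator (fun _ => 1) := by
    funext z
    by_cases hz : z.2 = n₀ ∧ z.1 ∈ Set.Icc (0:ℝ) a
    · have hmem : z ∈ Set.Icc (0:ℝ) a ×ˢ ({n₀} : Set ℤ) := ⟨hz.2, hz.1⟩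
      rw [Set.indicator_of_mem hmem]
      simp only [bumpF]
      rw [if_pos hz]
      simp
    · have hmem : z ∉ Set.Icc (0:ℝ) a ×ˢ ({n₀} : Set ℤ) := by
        intro hc; exact hz ⟨hc.2, hc.1⟩
      rw [Set.indicator_of_notMem hmem]
      simp only [bumpF]
      rw [if_neg hz]
      simp [ENNReal.zero_rpow_of_pos hp]
  rw [hfun, lintegral_indicator (measurableSet_Icc.prod (measurableSet_singleton _)),
    setLIntegral_one]
  rw [muZ, Measure.prod_prod, Real.volume_Icc, Measure.count_singleton, mul_one,
    sub_zero]

lemma norm_fourier_one (n : ℤ) (y : AddCircle (1:ℝ)) : ‖(fourier n y : ℂ)‖ = 1 := by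
  rw [fourier_apply]; exact Circle.norm_coe _

lemma eLpNorm_prod_lb (T : ℝ) (hT : 0 < T) (D : ℕ) :
    (ENNReal.ofReal ((1/(10*Real.sqrt T)/2 * (1/(10*Real.sqrt T)/2))^2 * (2*T) *
        (Real.sqrt T/2))) ^ ((1:ℝ)/2)
      ≤ eLpNorm (fun q : ℝ × (ℝ × AddCircle (1:ℝ)) =>
          waveguideProp (bumpF (1/(10*Real.sqrt T)) 0) q.1 q.2 *
          waveguideProp (bumpF (1/(10*Real.sqrt T)) (100*D)) q.1 q.2) 2
        (((volume : Measure ℝ).restrict (Set.Icc (-T) T)).prod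
          ((volume : Measure ℝ).prod (volume : Measure (AddCircle (1:ℝ))))) := by
  set s := Real.sqrt T with hs_def
  have hs : 0 < s := Real.sqrt_pos.mpr hT
  set u := 1/(10*s) with hu_def
  have hu : 0 < u := by positivity
  set c := u/2 * (u/2) with hc_def
  have hc : 0 < c := by positivity
  set S : Set (ℝ × (ℝ × AddCircle (1:ℝ))) :=
    Set.Icc (-T) T ×ˢ (Set.Icc (0:ℝ) (s/2) ×ˢ Set.univ) with hS_def
  set h : ℝ × (ℝ × AddCircle (1:ℝ)) → ℂ := fun q =>
    waveguideProp (bumpF u 0) q.1 q.2 * waveguideProp (bumpF u (100*D)) q.1 q.2 with hh_def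
  set μ := ((volume : Measure ℝ).restrict (Set.Icc (-T) T)).prod
          ((volume : Measure ℝ).prod (volume : Measure (AddCircle (1:ℝ)))) with hμ_def
  -- pointwise bound on S
  have hpt : ∀ q ∈ S, c ≤ ‖h q‖ := by
    rintro ⟨t, x, y⟩ ⟨ht, hx, -⟩
    have ht' : |t| ≤ T := abs_le.mpr ⟨ht.1, ht.2⟩
    have h1 := mod_lb T hT 0 t x ht' hx.1 hx.2
    have h2 := mod_lb T hT (100*D) t x ht' hx.1 hx.2
    have e1 := waveguideProp_bump u 0 t (x, y)
    have e2 := waveguideProp_bump u (100*D) t (x, y)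
    simp only [hh_def]
    rw [e1, e2]
    rw [norm_mul, norm_mul, norm_mul, norm_fourier_one, norm_fourier_one, mul_one, mul_one]
    calc c = u/2 * (u/2) := hc_def
      _ ≤ _ := mul_le_mul h1 h2 (by positivity) (norm_nonneg _)
  -- measure of S
  have hμS : μ S = ENNReal.ofReal (2*T) * ENNReal.ofReal (s/2) := by
    rw [hμ_def, hS_def, Measure.prod_prod, Measure.prod_prod,
      Measure.restrict_apply measurableSet_Icc, Set.inter_self, Real.volume_Icc,
      Real.volume_Icc, AddCircle.measure_univ, ENNReal.ofReal_one, mul_one,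
      sub_zero]
    norm_num
    ring_nf
    rw [ENNReal.ofReal_mul hT.le, ENNReal.ofReal_ofNat]
    ring
  -- lintegral lower bound
  have hlin : ENNReal.ofReal c ^ (2:ℝ) * μ S ≤ ∫⁻ q, (‖h q‖₊ : ℝ≥0∞) ^ (2:ℝ) ∂μ := by
    rw [← lintegral_indicator_const (by
      exact (measurableSet_Icc.prod (measurableSet_Icc.prod MeasurableSet.univ)))]
    apply lintegral_mono
    intro q
    by_cases hq : q ∈ S
    · rw [Set.indicator_of_mem hq]
      have : ENNReal.ofReal c ≤ (‖h q‖₊ : ℝ≥0∞) := by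
        rw [← enorm_eq_nnnorm, ← ofReal_norm]
        exact ENNReal.ofReal_le_ofReal (hpt q hq)
      exact ENNReal.rpow_le_rpow this (by norm_num)
    · rw [Set.indicator_of_notMem hq]
      exact zero_le
  have htwo : (2:ℝ≥0∞).toReal = (2:ℝ) := by norm_num
  rw [eLpNorm_eq_lintegral_rpow_enorm_toReal (by norm_num) (by norm_num), htwo]
  have hkey : ENNReal.ofReal (c^2 * (2*T) * (s/2)) ≤ ∫⁻ q, (‖h q‖₊ : ℝ≥0∞) ^ (2:ℝ) ∂μ := by
    refine le_trans (le_of_eq ?_) hlin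
    rw [hμS, ← ENNReal.ofReal_mul (by positivity : (0:ℝ) ≤ 2*T),
      ENNReal.ofReal_rpow_of_nonneg hc.le (by norm_num : (0:ℝ) ≤ 2),
      ← ENNReal.ofReal_mul (by positivity)]
    congr 1
    rw [show (c^(2:ℝ)) = c^(2:ℕ) from by rw [← Real.rpow_natCast c 2]; norm_num]
    ring
  exact ENNReal.rpow_le_rpow hkey (by norm_num : (0:ℝ) ≤ 1/2)

set_option maxHeartbeats 2000000 in
lemma final_arith (D : ℕ) (T p : ℝ) (hD : 1 ≤ (D:ℝ)) (hT : 0 < T)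
    (hp1 : 12/7 ≤ p) (hp2 : p ≤ 2)
    (h : ((1/(10*Real.sqrt T)/2 * (1/(10*Real.sqrt T)/2))^2 * (2*T) *
          (Real.sqrt T/2)) ^ ((1:ℝ)/2)
       ≤ (D:ℝ)^((2:ℝ)-4/p) * (1/(10*Real.sqrt T))^((1:ℝ)/p) *
          (1/(10*Real.sqrt T))^((1:ℝ)/p)) :
    T ≤ (160000:ℝ)^2 * (D:ℝ)^(8*(p-2)/(4-p)) := by
  have hp0 : 0 < p := by linarith
  set s := Real.sqrt T with hs_def
  have hs : 0 < s := Real.sqrt_pos.mpr hT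
  have hs2 : s^2 = T := Real.sq_sqrt hT.le
  have hu : 0 < 1/(10*s) := by positivity
  have hd : 0 < (D:ℝ)^((2:ℝ)-4/p) := Real.rpow_pos_of_pos (by linarith) _
  -- simplify LHS
  have hA : (1/(10*s)/2 * (1/(10*s)/2))^2 * (2*T) * (s/2) = 1/(160000*s) := by
    rw [← hs2]; field_simp; ring
  have h400 : ((160000:ℝ))^((1:ℝ)/2) = 400 := by
    rw [show (160000:ℝ) = 400^(2:ℕ) by norm_num, ← Real.rpow_natCast (400:ℝ) 2,
      ← Real.rpow_mul (by norm_num)]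
    norm_num
  have hLHS : ((1/(10*s)/2 * (1/(10*s)/2))^2 * (2*T) * (s/2)) ^ ((1:ℝ)/2)
      = 1/(400 * s^((1:ℝ)/2)) := by
    rw [hA, one_div, Real.inv_rpow (by positivity), Real.mul_rpow (by norm_num) hs.le,
      h400]
    exact (one_div _).symm
  -- simplify RHS
  have hRHS : (D:ℝ)^((2:ℝ)-4/p) * (1/(10*s))^((1:ℝ)/p) * (1/(10*s))^((1:ℝ)/p)
      = (D:ℝ)^((2:ℝ)-4/p) * (1/(10*s))^((2:ℝ)/p) := by
    rw [mul_assoc, ← Real.rpow_add hu]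
    congr 2
    ring
  have hu_le : (1/(10*s))^((2:ℝ)/p) ≤ (s^((2:ℝ)/p))⁻¹ := by
    rw [one_div, Real.inv_rpow (by positivity)]
    apply inv_anti₀ (Real.rpow_pos_of_pos hs _)
    exact Real.rpow_le_rpow hs.le (by linarith) (by positivity)
  have h2 : (1:ℝ)/(400 * s^((1:ℝ)/2)) ≤ (D:ℝ)^((2:ℝ)-4/p) / s^((2:ℝ)/p) := by
    rw [hLHS] at h
    rw [hRHS] at h
    calc (1:ℝ)/(400 * s^((1:ℝ)/2)) ≤ (D:ℝ)^((2:ℝ)-4/p) * (1/(10*s))^((2:ℝ)/p) := h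
      _ ≤ (D:ℝ)^((2:ℝ)-4/p) * (s^((2:ℝ)/p))⁻¹ := by
          exact mul_le_mul_of_nonneg_left hu_le hd.le
      _ = _ := (div_eq_mul_inv _ _).symm
  have hX : 0 < s^((1:ℝ)/2) := Real.rpow_pos_of_pos hs _
  have hY : 0 < s^((2:ℝ)/p) := Real.rpow_pos_of_pos hs _
  rw [div_le_div_iff₀ (by positivity) hY] at h2
  -- h2 : 1 * s^(2/p) ≤ D^(2-4/p) * (400 * s^(1/2))
  set q' : ℝ := 2/p - 1/2 with hq'_def
  have hq' : 0 < q' := by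
    rw [hq'_def]
    have : 1 ≤ 2/p := by rw [le_div_iff₀ hp0]; linarith
    linarith
  have base : s ^ q' ≤ 400 * (D:ℝ)^((2:ℝ)-4/p) := by
    rw [hq'_def, Real.rpow_sub hs, div_le_iff₀ hX]
    nlinarith [h2]
  have hM : (0:ℝ) < 400 * (D:ℝ)^((2:ℝ)-4/p) := by positivity
  have hTle : T ≤ (400 * (D:ℝ)^((2:ℝ)-4/p)) ^ ((2:ℝ)/q') := by
    calc T = s ^ (2:ℝ) := by
          rw [show ((2:ℝ)) = ((2:ℕ):ℝ) by norm_num, Real.rpow_natCast]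
          exact hs2.symm
      _ = (s ^ q') ^ ((2:ℝ)/q') := by
          rw [← Real.rpow_mul hs.le]
          congr 1
          field_simp
      _ ≤ _ := Real.rpow_le_rpow (Real.rpow_nonneg hs.le _) base (by positivity)
  have hsplit : (400 * (D:ℝ)^((2:ℝ)-4/p)) ^ ((2:ℝ)/q')
      = (400:ℝ)^((2:ℝ)/q') * ((D:ℝ)^((2:ℝ)-4/p))^((2:ℝ)/q') := by
    rw [Real.mul_rpow (by norm_num) hd.le]
  have hexp : ((D:ℝ)^((2:ℝ)-4/p))^((2:ℝ)/q') = (D:ℝ)^(8*(p-2)/(4-p)) := by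
    rw [← Real.rpow_mul (by linarith : (0:ℝ) ≤ (D:ℝ))]
    congr 1
    rw [hq'_def]
    have h4p : (4:ℝ) - p ≠ 0 := by linarith
    have hq'ne : 2/p - 1/2 ≠ 0 := hq'.ne'
    have hq'eq : (2:ℝ)/p - 1/2 = (4-p)/(2*p) := by
      field_simp
      ring
    rw [hq'eq, div_div_eq_mul_div]
    field_simp [hp0.ne', h4p]
    ring
  have h4 : (400:ℝ)^((2:ℝ)/q') ≤ (160000:ℝ)^2 := by
    have hq'half : 1/2 ≤ q' := by
      rw [hq'_def]
      have : 1 ≤ 2/p := by rw [le_div_iff₀ hp0]; linarith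
      linarith
    have h1le : (1:ℝ) ≤ 2/p := by rw [le_div_iff₀ hp0]; linarith
    have hle4 : (2:ℝ)/q' ≤ 4 := by
      rw [div_le_iff₀ hq', hq'_def]
      linarith
    calc (400:ℝ)^((2:ℝ)/q') ≤ (400:ℝ)^((4:ℝ)) :=
          Real.rpow_le_rpow_of_exponent_le (by norm_num) hle4
      _ = (160000:ℝ)^2 := by
          rw [show (4:ℝ) = ((4:ℕ):ℝ) by norm_num, Real.rpow_natCast]
          norm_num
  calc T ≤ (400 * (D:ℝ)^((2:ℝ)-4/p)) ^ ((2:ℝ)/q') := hTle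
    _ = (400:ℝ)^((2:ℝ)/q') * (D:ℝ)^(8*(p-2)/(4-p)) := by rw [hsplit, hexp]
    _ ≤ (160000:ℝ)^2 * (D:ℝ)^(8*(p-2)/(4-p)) :=
        mul_le_mul_of_nonneg_right h4 (Real.rpow_nonneg (by linarith) _)


/-- `θ₁ = [0,δ] × ({0,…,δ} ∩ ℤ)` for `δ = D`. -/
def thetaOne (D : ℕ) : Set (ℝ × ℤ) :=
  {p | 0 ≤ p.1 ∧ p.1 ≤ (D : ℝ) ∧ 0 ≤ p.2 ∧ p.2 ≤ (D : ℤ)}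

/-- `θ₂ = [0,δ] × ({100δ,…,101δ} ∩ ℤ)` for `δ = D`. -/
def thetaTwo (D : ℕ) : Set (ℝ × ℤ) :=
  {p | 0 ≤ p.1 ∧ p.1 ≤ (D : ℝ) ∧ (100 * D : ℤ) ≤ p.2 ∧ p.2 ≤ (101 * D : ℤ)}

/-- Necessary condition (Appendix B): if the bilinear estimate
`‖e^{itΔ}f · e^{itΔ}g‖_{L²([-T,T]×ℝ×𝕋)} ≤ δ^{2-4/p} ‖f̂‖_{L^p}‖ĝ‖_{L^p}` holds
for all data Fourier-supported in `θ₁, θ₂`, then `T ≤ C δ^{8(p-2)/(4-p)}`. -/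
theorem bilinear_estimate_necessary_condition :
    ∃ C : ℝ, 0 < C ∧
      ∀ (D : ℕ) (T p : ℝ), 1 ≤ D → 0 < T → 12 / 7 ≤ p → p ≤ 2 →
        (∀ F G : ℝ × ℤ → ℂ,
          Function.support F ⊆ thetaOne D → Function.support G ⊆ thetaTwo D →
          eLpNorm
            (fun q : ℝ × (ℝ × AddCircle (1 : ℝ)) =>
              waveguideProp F q.1 q.2 * waveguideProp G q.1 q.2)
            2 (((volume : Measure ℝ).restrict (Set.Icc (-T) T)).prod
                ((volume : Measure ℝ).prod (volume : Measure (AddCircle (1 : ℝ)))))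
            ≤ ENNReal.ofReal ((D : ℝ) ^ ((2 : ℝ) - 4 / p)) *
                eLpNorm F (ENNReal.ofReal p) muZ * eLpNorm G (ENNReal.ofReal p) muZ) →
        T ≤ C * (D : ℝ) ^ (8 * (p - 2) / (4 - p)) := by
  refine ⟨(160000:ℝ)^2, by norm_num, ?_⟩
  intro D T p hD hT hp1 hp2 hyp
  have hD1 : (1:ℝ) ≤ (D:ℝ) := by exact_mod_cast hD
  have hDpos : (0:ℝ) < (D:ℝ) := by linarith
  have hp0 : 0 < p := by linarith
  have h4p : (0:ℝ) < 4 - p := by linarith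
  have hpow : 0 < (D:ℝ)^(8*(p-2)/(4-p)) := Real.rpow_pos_of_pos hDpos _
  by_cases hcase : T < 1/(100*(D:ℝ)^2)
  · -- small time: trivial
    have he : (-1:ℝ) ≤ 8*(p-2)/(4-p) := by
      rw [le_div_iff₀ h4p]
      nlinarith
    have hmono : (D:ℝ)^(-1:ℝ) ≤ (D:ℝ)^(8*(p-2)/(4-p)) :=
      Real.rpow_le_rpow_of_exponent_le hD1 he
    have hsm : T ≤ (D:ℝ)^(-1:ℝ) := by
      rw [Real.rpow_neg_one]
      have h1 : 1/(100*(D:ℝ)^2) ≤ (D:ℝ)⁻¹ := by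
        rw [one_div]
        apply inv_anti₀ (by positivity)
        nlinarith
      linarith
    nlinarith [hmono, hsm, hpow]
  · push_neg at hcase
    set s := Real.sqrt T with hs_def
    have hs : 0 < s := Real.sqrt_pos.mpr hT
    set u : ℝ := 1/(10*s) with hu_def
    have hu : 0 < u := by positivity
    -- u ≤ D
    have hsqrt_lb : 1/(10*(D:ℝ)) ≤ s := by
      have h1 : Real.sqrt (1/(100*(D:ℝ)^2)) ≤ s := Real.sqrt_le_sqrt hcase
      have h2 : Real.sqrt (1/(100*(D:ℝ)^2)) = 1/(10*(D:ℝ)) := by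
        rw [show (1:ℝ)/(100*(D:ℝ)^2) = (1/(10*(D:ℝ)))^2 by field_simp; ring]
        exact Real.sqrt_sq (by positivity)
      linarith [h2 ▸ h1]
    have huD : u ≤ (D:ℝ) := by
      rw [hu_def, div_le_iff₀ (by positivity)]
      have := mul_le_mul_of_nonneg_left hsqrt_lb (by positivity : (0:ℝ) ≤ 10*(D:ℝ))
      calc (1:ℝ) = 10*(D:ℝ) * (1/(10*(D:ℝ))) := by field_simp
        _ ≤ 10*(D:ℝ) * s := this
        _ = (D:ℝ) * (10*s) := by ring
    -- support conditions
    have hsupp1 : Function.support (bumpF u 0) ⊆ thetaOne D := by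
      intro q hq
      rw [Function.mem_support] at hq
      simp only [bumpF] at hq
      split_ifs at hq with hcond
      · obtain ⟨hq2, hq1⟩ := hcond
        exact ⟨hq1.1, le_trans hq1.2 huD, le_of_eq hq2.symm,
          by rw [hq2]; exact_mod_cast Int.ofNat_nonneg D⟩
      · exact absurd rfl hq
    have hsupp2 : Function.support (bumpF u (100*(D:ℤ))) ⊆ thetaTwo D := by
      intro q hq
      rw [Function.mem_support] at hq
      simp only [bumpF] at hq
      split_ifs at hq with hcond
      · obtain ⟨hq2, hq1⟩ := hcond
        refine ⟨hq1.1, le_trans hq1.2 huD, le_of_eq hq2.symm, ?_⟩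
        rw [hq2]
        have : (0:ℤ) ≤ (D:ℤ) := Int.ofNat_nonneg D
        omega
      · exact absurd rfl hq
    -- apply the hypothesis
    have hest := hyp (bumpF u 0) (bumpF u (100*(D:ℤ))) hsupp1 hsupp2
    rw [eLpNorm_bump u hu.le 0 p hp0, eLpNorm_bump u hu.le (100*(D:ℤ)) p hp0] at hest
    have hlb := eLpNorm_prod_lb T hT D
    have hchain := le_trans hlb hest
    -- convert to a real inequality
    have hA_nonneg : (0:ℝ) ≤ (u/2 * (u/2))^2 * (2*T) * (s/2) := by positivity
    rw [ENNReal.ofReal_rpow_of_nonneg hA_nonneg (by norm_num : (0:ℝ) ≤ 1/2),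
      ENNReal.ofReal_rpow_of_nonneg hu.le (by positivity : (0:ℝ) ≤ 1/p),
      ← ENNReal.ofReal_mul (by positivity), ← ENNReal.ofReal_mul (by positivity)]
      at hchain
    have hreal := (ENNReal.ofReal_le_ofReal_iff (by positivity)).mp hchain
    exact final_arith D T p hD1 hT hp1 hp2 hreal
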